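/- Let p₁ < p₂ < ... be an infinite sequence of distinct primes and K = ℚ(√p₁, √p₂, ...) ⊆ ℝ. If x ∈ K satisfies fᵢ(x) = x for every i, where fᵢ is the ℚ-automorphism of K sending √pᵢ to −√pᵢ and fixing √pⱼ for all j ≠ i, then x ∈ ℚ. -/

import Mathlib

/-- If `x ∈ K = ℚ(√p₁, √p₂, …)` is fixed by every automorphism `fᵢ`
(where `fᵢ(√pᵢ) = -√pᵢ` and `fᵢ(√pⱼ) = √pⱼ` for `j ≠ i`), then `x ∈ ℚ`. -/
theorem stmt_2 (p : ℕ → ℕ) (hp : ∀ i, (p i).Prime) (hmono : StrictMono p)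
    (K : Subfield ℝ) (hK : K = Subfield.closure (Set.range fun i => Real.sqrt (p i)))
    (hmem : ∀ i, Real.sqrt (p i) ∈ K)
    (f : ℕ → (K ≃+* K))
    (hf : ∀ i j, ((f i ⟨Real.sqrt (p j), hmem j⟩ : K) : ℝ) =
      if j = i then -Real.sqrt (p j) else Real.sqrt (p j))
    (x : K) (hx : ∀ i, f i x = x) :
    ∃ q : ℚ, (x : ℝ) = q := by
  classical
  set g : ℕ → ℝ := fun i => Real.sqrt (p i) with hg
  set F : Finset ℕ → Subfield ℝ := fun s => Subfield.closure (g '' s) with hF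
  -- positivity of the square roots
  have hgpos : ∀ i, 0 < g i := fun i =>
    Real.sqrt_pos.2 (by exact_mod_cast (hp i).pos)
  -- each F s is contained in K
  have hFK : ∀ s, F s ≤ K := by
    intro s
    apply Subfield.closure_le.2
    rintro y ⟨j, _, rfl⟩
    exact hmem j
  -- elements of F s are fixed by f i when i ∉ s
  have hfix : ∀ i (s : Finset ℕ), i ∉ s → ∀ y (hy : y ∈ K), y ∈ F s →
      ((f i ⟨y, hy⟩ : K) : ℝ) = y := by
    intro i s his y hy hyF
    -- the fixed subfield of f i, mapped into ℝ
    set E : Subfield ℝ :=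
      Subfield.map K.subtype (RingHom.eqLocusField ((f i : K ≃+* K) : K →+* K) (RingHom.id K))
      with hE
    have hFE : F s ≤ E := by
      apply Subfield.closure_le.2
      rintro z ⟨j, hj, rfl⟩
      refine ⟨⟨g j, hmem j⟩, ?_, rfl⟩
      have hji : j ≠ i := fun h => his (h ▸ hj)
      have := hf i j
      rw [if_neg hji] at this
      exact Subtype.ext this
    obtain ⟨z, hz, hzy⟩ := hFE hyF
    have : (⟨y, hy⟩ : K) = z := Subtype.ext hzy.symm
    rw [this]
    have hz' : f i z = z := hz
    rw [hz']
    exact hzy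
  -- g i is not in F s when i ∉ s
  have hnot : ∀ i (s : Finset ℕ), i ∉ s → g i ∉ F s := by
    intro i s his hgi
    have h1 := hfix i s his (g i) (hmem i) hgi
    have h2 := hf i i
    rw [if_pos rfl] at h2
    rw [h1] at h2
    have h3 := hgpos i
    simp only [hg] at h2 h3
    linarith
  -- main induction
  have main : ∀ s : Finset ℕ, ∀ y : ℝ, y ∈ F s →
      (∀ i (h : y ∈ K), ((f i ⟨y, h⟩ : K) : ℝ) = y) → ∃ q : ℚ, y = q := by
    intro s
    induction s using Finset.induction_on with
    | empty =>
      intro y hy _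
      have : F ∅ ≤ (Rat.castHom ℝ).fieldRange := by
        simp only [hF, Finset.coe_empty, Set.image_empty, Subfield.closure_empty]
        exact bot_le
      obtain ⟨q, hq⟩ := this hy
      exact ⟨q, hq.symm⟩
    | @insert a s has ih =>
      intro y hy hyfix
      set r : ℝ := g a with hr
      have hr2 : r * r = (p a : ℝ) := Real.mul_self_sqrt (by positivity)
      have hrnot : r ∉ F s := hnot a s has
      -- the subfield F s + F s • r
      set D : Subfield ℝ :=
        { carrier := {z | ∃ u v : ℝ, u ∈ F s ∧ v ∈ F s ∧ z = u + v * r}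
          zero_mem' := ⟨0, 0, zero_mem _, zero_mem _, by ring⟩
          one_mem' := ⟨1, 0, one_mem _, zero_mem _, by ring⟩
          add_mem' := by
            rintro z w ⟨u, v, hu, hv, rfl⟩ ⟨u', v', hu', hv', rfl⟩
            exact ⟨u + u', v + v', add_mem hu hu', add_mem hv hv', by ring⟩
          neg_mem' := by
            rintro z ⟨u, v, hu, hv, rfl⟩
            exact ⟨-u, -v, neg_mem hu, neg_mem hv, by ring⟩
          mul_mem' := by
            rintro z w ⟨u, v, hu, hv, rfl⟩ ⟨u', v', hu', hv', rfl⟩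
            refine ⟨u * u' + v * v' * (p a : ℝ), u * v' + v * u', ?_, ?_, ?_⟩
            · exact add_mem (mul_mem hu hu')
                (mul_mem (mul_mem hv hv') (natCast_mem _ _))
            · exact add_mem (mul_mem hu hv') (mul_mem hv hu')
            · rw [← hr2]; ring
          inv_mem' := by
            rintro z ⟨u, v, hu, hv, rfl⟩
            by_cases hz0 : u + v * r = 0
            · rw [hz0]
              exact ⟨0, 0, zero_mem _, zero_mem _, by simp⟩
            · have hdF : u * u - v * v * (p a : ℝ) ∈ F s :=
                sub_mem (mul_mem hu hu) (mul_mem (mul_mem hv hv) (natCast_mem _ _))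
              have hd0 : u * u - v * v * (p a : ℝ) ≠ 0 := by
                intro h0
                have hv0 : v ≠ 0 := by
                  intro hv0
                  rw [hv0] at h0 hz0
                  simp only [mul_zero, zero_mul, sub_zero, mul_self_eq_zero] at h0
                  rw [h0] at hz0
                  simp at hz0
                have hfac : (u / v - r) * (u / v + r) = 0 := by
                  field_simp
                  linear_combination h0 - v * v * hr2
                rcases mul_eq_zero.1 hfac with h | h
                · exact hrnot (by have hre : r = u / v := by linarith
                                  rw [hre]; exact div_mem hu hv)
                · exact hrnot (by have hre : r = -(u / v) := by linarith
                                  rw [hre]; exact neg_mem (div_mem hu hv))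
              have key : (u + v * r) * (u - v * r) = u * u - v * v * (p a : ℝ) := by
                linear_combination (-(v * v)) * hr2
              have hmul : (u + v * r) * ((u - v * r) / (u * u - v * v * (p a : ℝ))) = 1 := by
                rw [← mul_div_assoc, key, div_self hd0]
              refine ⟨u / (u * u - v * v * (p a : ℝ)), -v / (u * u - v * v * (p a : ℝ)),
                div_mem hu hdF, div_mem (neg_mem hv) hdF, ?_⟩
              rw [inv_eq_of_mul_eq_one_right hmul]
              ring
          }
        with hD
      -- F (insert a s) ≤ D
      have hFD : F (insert a s) ≤ D := by
        apply Subfield.closure_le.2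
        rintro z ⟨j, hj, rfl⟩
        rcases Finset.mem_insert.1 hj with rfl | hj'
        · exact ⟨0, 1, zero_mem _, one_mem _, by ring⟩
        · exact ⟨g j, 0, Subfield.subset_closure ⟨j, hj', rfl⟩, zero_mem _, by ring⟩
      obtain ⟨u, v, hu, hv, rfl⟩ := hFD hy
      -- apply f a
      have hyK : u + v * r ∈ K := (hFK (insert a s)) hy
      have huK : u ∈ K := hFK s hu
      have hvK : v ∈ K := hFK s hv
      have hrK : r ∈ K := hmem a
      have hfa := hyfix a hyK
      have heq : (⟨u + v * r, hyK⟩ : K) = ⟨u, huK⟩ + ⟨v, hvK⟩ * ⟨r, hrK⟩ := by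
        ext; simp
      have hfu : ((f a ⟨u, huK⟩ : K) : ℝ) = u := hfix a s has u huK hu
      have hfv : ((f a ⟨v, hvK⟩ : K) : ℝ) = v := hfix a s has v hvK hv
      have hfr : ((f a ⟨r, hrK⟩ : K) : ℝ) = -r := by
        have := hf a a; rw [if_pos rfl] at this; exact this
      rw [heq, map_add, map_mul] at hfa
      push_cast at hfa
      rw [hfu, hfv, hfr] at hfa
      have hv0 : v = 0 := by
        have h2 : 2 * (v * r) = 0 := by linarith
        have hrne : r ≠ 0 := ne_of_gt (hgpos a)
        rcases mul_eq_zero.1 h2 with h | h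
        · norm_num at h
        · rcases mul_eq_zero.1 h with h' | h'
          · exact h'
          · exact absurd h' hrne
      have hyu : u + v * r = u := by rw [hv0]; ring
      rw [hyu]
      refine ih u hu (fun i h => ?_)
      have h' : u + v * r ∈ K := by rw [hyu]; exact h
      have hfixy := hyfix i h'
      have he : (⟨u + v * r, h'⟩ : K) = ⟨u, h⟩ := Subtype.ext hyu
      rw [he] at hfixy
      rw [hyu] at hfixy
      exact hfixy
  -- x lies in F s for some finite s
  have hxmem : ∃ s : Finset ℕ, (x : ℝ) ∈ F s := by
    have hx' : (x : ℝ) ∈ Subfield.closure (Set.range g) := by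
      rw [← hK]; exact x.2
    have hsup : Subfield.closure (Set.range g) = ⨆ s : Finset ℕ, F s := by
      apply le_antisymm
      · apply Subfield.closure_le.2
        rintro z ⟨i, rfl⟩
        have h1 : g i ∈ F {i} := Subfield.subset_closure ⟨i, by simp, rfl⟩
        exact (le_iSup F ({i} : Finset ℕ)) h1
      · apply iSup_le
        intro s
        apply Subfield.closure_le.2
        rintro z ⟨j, _, rfl⟩
        exact Subfield.subset_closure ⟨j, rfl⟩
    rw [hsup] at hx'
    have hdir : Directed (· ≤ ·) F := by
      intro s t
      refine ⟨s ∪ t, ?_, ?_⟩ <;>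
        exact Subfield.closure_mono (Set.image_mono (by simp [Finset.subset_union_left,
          Finset.subset_union_right]))
    exact (Subfield.mem_iSup_of_directed hdir).1 hx'
  obtain ⟨s, hs⟩ := hxmem
  exact main s (x : ℝ) hs (fun i h => by
    have : (⟨(x : ℝ), h⟩ : K) = x := Subtype.ext rfl
    rw [this, hx i])
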